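/- Optimal causal eavesdropper incurs the normalized equivocation: let α and β be finite types, n a positive natural number, and p a joint probability mass function on β × (Fin n → α) for a message M and source sequence X^n = (X₁,…,Xₙ). The infimum, over all families of functions z_i : β × (Fin (i−1) → α) → (probability mass functions on α) for i = 1,…,n with z_i(m, x^{i−1})(x_i) > 0 whenever the corresponding joint probability is positive, of the time-averaged expected log-loss (1/n) ∑_{i=1}^{n} E[ log( 1 / z_i(M, X^{i−1})(X_i) ) ] equals (1/n)·H(X^n | M), and it is attained by the posterior choices z_i(m, x^{i−1})(x) = P(X_i = x | M = m, X^{i−1} = x^{i−1}). -/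

import Mathlib

open scoped Classical NNReal BigOperators

/-- The pushforward (marginal) of a pmf `p` on a finite type `σ` along `f : σ → τ`. -/
noncomputable def push {σ τ : Type*} [Fintype σ] (p : σ → ℝ≥0) (f : σ → τ) (t : τ) : ℝ≥0 :=
  ∑ s ∈ Finset.univ.filter (fun s => f s = t), p s

/-- Conditional entropy `H(V | W)` of the first coordinate given the second, for a
joint pmf `q` on `V × W` (natural logarithm, terms with `q (v, w) = 0` contribute 0). -/
noncomputable def condEnt {V W : Type*} [Fintype V] [Fintype W] (q : V × W → ℝ≥0) : ℝ :=
  -∑ vw : V × W, (q vw : ℝ) * Real.log ((q vw : ℝ) / ∑ v, (q (v, vw.2) : ℝ))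

/-- The prefix `X^{i-1} = (X₁, …, X_{i-1})` of a source sequence. -/
def prefixOf {α : Type*} {n : ℕ} (x : Fin n → α) (i : Fin n) : Fin i.val → α :=
  fun j : Fin i.val => x ⟨j.val, j.isLt.trans i.isLt⟩

set_option linter.unusedSectionVars false

section Aux

-- coercion of push
lemma push_coe {σ τ : Type*} [Fintype σ] (p : σ → ℝ≥0) (f : σ → τ) (t : τ) :
    (push p f t : ℝ) = ∑ s ∈ Finset.univ.filter (fun s => f s = t), (p s : ℝ) := by
  simp [push]

-- a point of positive mass witness: p s ≤ push p f (f s)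
lemma le_push {σ τ : Type*} [Fintype σ] (p : σ → ℝ≥0) (f : σ → τ) (s : σ) :
    p s ≤ push p f (f s) := by
  refine Finset.single_le_sum (fun _ _ => zero_le) ?_
  simp

-- fiberwise sum
lemma sum_push {σ τ : Type*} [Fintype σ] [Fintype τ] (p : σ → ℝ≥0) (f : σ → τ) (c : τ → ℝ) :
    ∑ s, (p s : ℝ) * c (f s) = ∑ t, (push p f t : ℝ) * c t := by
  rw [← Finset.sum_fiberwise Finset.univ f (fun s => (p s : ℝ) * c (f s))]
  refine Finset.sum_congr rfl fun t _ => ?_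
  rw [push_coe, Finset.sum_mul]
  refine Finset.sum_congr rfl fun s hs => ?_
  rw [Finset.mem_filter] at hs
  rw [hs.2]

-- marginalizing out the first coordinate of a paired push
lemma push_pair_marg {σ τ υ : Type*} [Fintype σ] [Fintype υ] (p : σ → ℝ≥0)
    (h : σ → υ) (g : σ → τ) (t : τ) :
    ∑ x : υ, push p (fun s => (h s, g s)) (x, t) = push p g t := by
  simp only [push, Finset.sum_filter]
  rw [Finset.sum_comm]
  refine Finset.sum_congr rfl fun s _ => ?_
  by_cases hgs : g s = t
  · simp [Prod.ext_iff, hgs]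
  · simp [Prod.ext_iff, hgs]

-- Gibbs' inequality
lemma gibbs {ι : Type*} [Fintype ι] (q r : ι → ℝ) (hq : ∀ x, 0 ≤ q x)
    (hr : ∀ x, 0 ≤ r x) (hpos : ∀ x, 0 < q x → 0 < r x)
    (hsum : ∑ x, r x ≤ ∑ x, q x) :
    ∑ x, q x * Real.log (r x / q x) ≤ 0 := by
  have h1 : ∀ x, q x * Real.log (r x / q x) ≤ r x - q x := by
    intro x
    rcases eq_or_lt_of_le (hq x) with h | h
    · simp [← h, hr x]
    · have hrx := hpos x h
      have hdiv : 0 < r x / q x := div_pos hrx h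
      calc q x * Real.log (r x / q x) ≤ q x * (r x / q x - 1) := by
            exact mul_le_mul_of_nonneg_left (Real.log_le_sub_one_of_pos hdiv) (hq x)
        _ = r x - q x := by field_simp
  calc ∑ x, q x * Real.log (r x / q x) ≤ ∑ x, (r x - q x) := Finset.sum_le_sum fun x _ => h1 x
    _ = ∑ x, r x - ∑ x, q x := Finset.sum_sub_distrib _ _
    _ ≤ 0 := by linarith

end Aux

section Qk

variable {α β : Type*} [Fintype α] [Fintype β] {n : ℕ}

def trunc (k : ℕ) (hk : k ≤ n) (x : Fin n → α) : Fin k → α :=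
  fun j => x ⟨j.1, lt_of_lt_of_le j.2 hk⟩

lemma prefixOf_eq_trunc (x : Fin n → α) (i : Fin n) : prefixOf x i = trunc i.1 i.isLt.le x := rfl

noncomputable def Qk (p : β × (Fin n → α) → ℝ≥0) (k : ℕ) (hk : k ≤ n) : β × (Fin k → α) → ℝ≥0 :=
  push p (fun w => (w.1, trunc k hk w.2))

lemma s_eq_Qk (p : β × (Fin n → α) → ℝ≥0) (i : Fin n) (w : β × (Fin n → α)) :
    push p (fun w' => (w'.1, prefixOf w'.2 i)) (w.1, prefixOf w.2 i)
      = Qk p i.1 i.isLt.le (w.1, trunc i.1 i.isLt.le w.2) := rfl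

lemma Qk_step (p : β × (Fin n → α) → ℝ≥0) (i : Fin n) (w : β × (Fin n → α)) :
    push p (fun w' => (w'.2 i, (w'.1, prefixOf w'.2 i))) (w.2 i, (w.1, prefixOf w.2 i))
      = Qk p (i.1 + 1) i.isLt (w.1, trunc (i.1 + 1) i.isLt w.2) := by
  unfold push Qk
  congr 1
  ext w'
  simp only [Finset.mem_filter, Finset.mem_univ, true_and, Prod.ext_iff, funext_iff]
  constructor
  · rintro ⟨h1, h2, h3⟩
    refine ⟨h2, fun j => ?_⟩
    rcases Nat.lt_succ_iff_lt_or_eq.mp j.2 with hj | hj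
    · exact h3 ⟨j.1, hj⟩
    · show w'.2 ⟨j.1, _⟩ = w.2 ⟨j.1, _⟩
      have hji : (⟨j.1, lt_of_lt_of_le j.2 i.isLt⟩ : Fin n) = i := Fin.ext hj
      simpa [hji] using h1
  · rintro ⟨h1, h2⟩
    refine ⟨?_, h1, fun j => h2 ⟨j.1, Nat.lt_succ_of_lt j.2⟩⟩
    have := h2 ⟨i.1, Nat.lt_succ_self _⟩
    simpa [trunc] using this
end Qk

section Bases
variable {α β : Type*} [Fintype α] [Fintype β] {n : ℕ}

lemma Qk_zero (p : β × (Fin n → α) → ℝ≥0) (m : β) (e : Fin 0 → α) :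
    Qk p 0 (Nat.zero_le n) (m, e) = push p Prod.fst m := by
  unfold Qk push
  congr 1
  ext w'
  simp [Prod.ext_iff, Subsingleton.elim (trunc 0 (Nat.zero_le n) w'.2) e]

lemma Qk_top (p : β × (Fin n → α) → ℝ≥0) (w : β × (Fin n → α)) :
    Qk p n le_rfl (w.1, trunc n le_rfl w.2) = p w := by
  have htr : ∀ x : Fin n → α, trunc n le_rfl x = x := fun _ => rfl
  unfold Qk push
  simp only [htr]
  have : (Finset.univ.filter fun w' : β × (Fin n → α) => (w'.1, w'.2) = (w.1, w.2)) = {w} := by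
    ext w'
    simp [Prod.ext_iff, ← Prod.ext_iff]
  rw [this, Finset.sum_singleton]

lemma push_swap (p : β × (Fin n → α) → ℝ≥0) (x : Fin n → α) (m : β) :
    push p (fun w => (w.2, w.1)) (x, m) = p (m, x) := by
  unfold push
  refine Finset.sum_eq_single_of_mem (m, x) (by simp) ?_
  intro b hb hne
  simp only [Finset.mem_filter, Finset.mem_univ, true_and, Prod.ext_iff] at hb
  exact absurd (Prod.ext hb.2 hb.1) hne

lemma condEnt_eq (p : β × (Fin n → α) → ℝ≥0) :
    condEnt (push p (fun w => (w.2, w.1)))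
      = ∑ w : β × (Fin n → α),
          (p w : ℝ) * (Real.log (push p Prod.fst w.1 : ℝ) - Real.log (p w : ℝ)) := by
  unfold condEnt
  rw [← Finset.sum_neg_distrib]
  refine Fintype.sum_equiv (Equiv.prodComm (Fin n → α) β) _ _ fun vw => ?_
  obtain ⟨x, m⟩ := vw
  simp only [Equiv.prodComm_apply, Prod.swap_prod_mk]
  · have hmarg : ∑ v, (push p (fun w => (w.2, w.1)) (v, m) : ℝ) = (push p Prod.fst m : ℝ) := by
      rw [← NNReal.coe_sum]
      congr 1
      exact push_pair_marg p Prod.snd Prod.fst m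
    rw [push_swap, hmarg]
    rcases eq_or_lt_of_le (zero_le : 0 ≤ p (m, x)) with h | h
    · simp [← h]
    · have hS : (0 : ℝ) < (push p Prod.fst m : ℝ) := by
        have := le_push p Prod.fst (m, x)
        exact_mod_cast lt_of_lt_of_le h this
      have hp' : (0 : ℝ) < (p (m, x) : ℝ) := by exact_mod_cast h
      rw [Real.log_div hp'.ne' hS.ne']
      ring
end Bases

section Zstar
variable {α β : Type*} [Fintype α] [Fintype β] {n : ℕ}

noncomputable def zstar (p : β × (Fin n → α) → ℝ≥0) (i : Fin n)
    (mu : β × (Fin i.val → α)) (x : α) : ℝ≥0 :=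
  if 0 < push p (fun w => (w.1, prefixOf w.2 i)) mu then
    push p (fun w => (w.2 i, (w.1, prefixOf w.2 i))) (x, mu) /
      push p (fun w => (w.1, prefixOf w.2 i)) mu
  else (Fintype.card α : ℝ≥0)⁻¹

lemma zstar_sum (p : β × (Fin n → α) → ℝ≥0) [Nonempty α] (i : Fin n)
    (mu : β × (Fin i.val → α)) : ∑ x, zstar p i mu x = 1 := by
  by_cases hs : 0 < push p (fun w => (w.1, prefixOf w.2 i)) mu
  · simp only [zstar, if_pos hs]
    rw [← Finset.sum_div, push_pair_marg p (fun w => w.2 i) (fun w => (w.1, prefixOf w.2 i)) mu,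
      div_self hs.ne']
  · simp only [zstar, if_neg hs, Finset.sum_const, Finset.card_univ, nsmul_eq_mul]
    rw [mul_inv_cancel₀]
    exact_mod_cast Fintype.card_ne_zero

lemma zstar_pos (p : β × (Fin n → α) → ℝ≥0) (i : Fin n) (x : α) (mu : β × (Fin i.val → α))
    (h : 0 < push p (fun w => (w.2 i, (w.1, prefixOf w.2 i))) (x, mu)) :
    0 < zstar p i mu x := by
  have hs : 0 < push p (fun w => (w.1, prefixOf w.2 i)) mu := by
    rw [← push_pair_marg p (fun w => w.2 i) (fun w => (w.1, prefixOf w.2 i)) mu]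
    exact lt_of_lt_of_le h (Finset.single_le_sum
      (f := fun x' => push p (fun w => (w.2 i, (w.1, prefixOf w.2 i))) (x', mu))
      (fun _ _ => zero_le) (Finset.mem_univ x))
  rw [zstar, if_pos hs]
  exact div_pos h hs

lemma zstar_eq (p : β × (Fin n → α) → ℝ≥0) (i : Fin n) (mu : β × (Fin i.val → α))
    (hs : 0 < push p (fun w => (w.1, prefixOf w.2 i)) mu) (x : α) :
    zstar p i mu x =
      push p (fun w => (w.2 i, (w.1, prefixOf w.2 i))) (x, mu) /
        push p (fun w => (w.1, prefixOf w.2 i)) mu := by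
  rw [zstar, if_pos hs]

lemma zstar_loss (p : β × (Fin n → α) → ℝ≥0) :
    ∑ i : Fin n, ∑ w : β × (Fin n → α),
        (p w : ℝ) * Real.log (1 / (zstar p i (w.1, prefixOf w.2 i) (w.2 i) : ℝ))
      = condEnt (push p (fun w : β × (Fin n → α) => (w.2, w.1))) := by
  rw [Finset.sum_comm, condEnt_eq]
  refine Finset.sum_congr rfl fun w _ => ?_
  rcases eq_or_lt_of_le (zero_le : 0 ≤ p w) with hw | hw
  · simp [← hw]
  set φ : ℕ → ℝ := fun k =>
    if hk : k ≤ n then Real.log (Qk p k hk (w.1, trunc k hk w.2) : ℝ) else 0 with hφ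
  have key : ∀ i : Fin n,
      Real.log (1 / (zstar p i (w.1, prefixOf w.2 i) (w.2 i) : ℝ)) = φ i.1 - φ (i.1 + 1) := by
    intro i
    have hsw : 0 < push p (fun w' => (w'.1, prefixOf w'.2 i)) (w.1, prefixOf w.2 i) :=
      lt_of_lt_of_le hw (le_push p (fun w' => (w'.1, prefixOf w'.2 i)) w)
    have hqw : 0 < push p (fun w' => (w'.2 i, (w'.1, prefixOf w'.2 i))) (w.2 i, (w.1, prefixOf w.2 i)) :=
      lt_of_lt_of_le hw (le_push p (fun w' => (w'.2 i, (w'.1, prefixOf w'.2 i))) w)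
    rw [zstar_eq p i _ hsw]
    rw [NNReal.coe_div, one_div_div]
    have h1 : (0:ℝ) < (push p (fun w' => (w'.1, prefixOf w'.2 i)) (w.1, prefixOf w.2 i) : ℝ) := hsw
    have h2 : (0:ℝ) < (push p (fun w' => (w'.2 i, (w'.1, prefixOf w'.2 i))) (w.2 i, (w.1, prefixOf w.2 i)) : ℝ) := hqw
    rw [Real.log_div h1.ne' h2.ne']
    simp only [hφ]
    rw [dif_pos i.isLt.le, dif_pos (show i.1 + 1 ≤ n from i.isLt)]
    rw [s_eq_Qk p i w, Qk_step p i w]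
  calc ∑ i : Fin n, (p w : ℝ) * Real.log (1 / (zstar p i (w.1, prefixOf w.2 i) (w.2 i) : ℝ))
      = (p w : ℝ) * ∑ i : Fin n, (φ i.1 - φ (i.1 + 1)) := by
        rw [Finset.mul_sum]; exact Finset.sum_congr rfl fun i _ => by rw [key i]
    _ = (p w : ℝ) * (φ 0 - φ n) := by
        rw [Fin.sum_univ_eq_sum_range (fun k => φ k - φ (k + 1)), Finset.sum_range_sub' φ]
    _ = _ := by
        simp only [hφ]
        rw [dif_pos (Nat.zero_le n), dif_pos (le_refl n)]
        rw [Qk_zero p w.1 (trunc 0 (Nat.zero_le n) w.2), Qk_top p w]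

end Zstar

section Main
variable {α β : Type*} [Fintype α] [Fintype β] {n : ℕ}

lemma loss_mono (p : β × (Fin n → α) → ℝ≥0)
    (z : (i : Fin n) → β × (Fin i.val → α) → α → ℝ≥0)
    (hz1 : ∀ (i : Fin n) (mu : β × (Fin i.val → α)), ∑ x, z i mu x = 1)
    (hz2 : ∀ (i : Fin n) (x : α) (mu : β × (Fin i.val → α)),
      0 < push p (fun w : β × (Fin n → α) => (w.2 i, (w.1, prefixOf w.2 i))) (x, mu) →
      0 < z i mu x) (i : Fin n) :
    ∑ w : β × (Fin n → α), (p w : ℝ) * Real.log (1 / (zstar p i (w.1, prefixOf w.2 i) (w.2 i) : ℝ))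
      ≤ ∑ w : β × (Fin n → α), (p w : ℝ) * Real.log (1 / (z i (w.1, prefixOf w.2 i) (w.2 i) : ℝ)) := by
  rw [← sub_nonneg, ← Finset.sum_sub_distrib]
  set c : α × (β × (Fin i.val → α)) → ℝ := fun t =>
    Real.log (1 / (z i t.2 t.1 : ℝ)) - Real.log (1 / (zstar p i t.2 t.1 : ℝ)) with hc
  have hstep : ∑ w : β × (Fin n → α),
      ((p w : ℝ) * Real.log (1 / (z i (w.1, prefixOf w.2 i) (w.2 i) : ℝ))
        - (p w : ℝ) * Real.log (1 / (zstar p i (w.1, prefixOf w.2 i) (w.2 i) : ℝ)))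
      = ∑ t, (push p (fun w : β × (Fin n → α) => (w.2 i, (w.1, prefixOf w.2 i))) t : ℝ) * c t := by
    rw [← sum_push p (fun w : β × (Fin n → α) => (w.2 i, (w.1, prefixOf w.2 i))) c]
    exact Finset.sum_congr rfl fun w _ => by rw [hc]; ring
  rw [hstep, Fintype.sum_prod_type, Finset.sum_comm]
  refine Finset.sum_nonneg fun mu _ => ?_
  by_cases hs : 0 < push p (fun w : β × (Fin n → α) => (w.1, prefixOf w.2 i)) mu
  · have hg := gibbs
      (fun x => (push p (fun w : β × (Fin n → α) => (w.2 i, (w.1, prefixOf w.2 i))) (x, mu) : ℝ))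
      (fun x => (push p (fun w : β × (Fin n → α) => (w.1, prefixOf w.2 i)) mu : ℝ) * (z i mu x : ℝ))
      (fun x => NNReal.coe_nonneg _)
      (fun x => mul_nonneg (NNReal.coe_nonneg _) (NNReal.coe_nonneg _))
      (fun x hx => by
        have hq : 0 < push p (fun w : β × (Fin n → α) => (w.2 i, (w.1, prefixOf w.2 i))) (x, mu) := by
          exact_mod_cast hx
        have hz := hz2 i x mu hq
        have : (0:ℝ) < (z i mu x : ℝ) := by exact_mod_cast hz
        exact mul_pos (by exact_mod_cast hs) this)
      (by
        rw [← Finset.mul_sum]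
        have h1 : ∑ x, (z i mu x : ℝ) = 1 := by exact_mod_cast congrArg NNReal.toReal (hz1 i mu)
        rw [h1, mul_one]
        have := push_pair_marg p (fun w : β × (Fin n → α) => w.2 i)
          (fun w : β × (Fin n → α) => (w.1, prefixOf w.2 i)) mu
        exact le_of_eq (by exact_mod_cast this.symm))
    have heq : ∑ x, (push p (fun w : β × (Fin n → α) => (w.2 i, (w.1, prefixOf w.2 i))) (x, mu) : ℝ) * c (x, mu)
        = -∑ x, (push p (fun w : β × (Fin n → α) => (w.2 i, (w.1, prefixOf w.2 i))) (x, mu) : ℝ) *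
            Real.log (((push p (fun w : β × (Fin n → α) => (w.1, prefixOf w.2 i)) mu : ℝ) * (z i mu x : ℝ)) /
              (push p (fun w : β × (Fin n → α) => (w.2 i, (w.1, prefixOf w.2 i))) (x, mu) : ℝ)) := by
      rw [← Finset.sum_neg_distrib]
      refine Finset.sum_congr rfl fun x _ => ?_
      rcases eq_or_lt_of_le (zero_le : 0 ≤ push p (fun w : β × (Fin n → α) => (w.2 i, (w.1, prefixOf w.2 i))) (x, mu)) with hq | hq
      · simp [← hq]
      · have hq' : (0:ℝ) < (push p (fun w : β × (Fin n → α) => (w.2 i, (w.1, prefixOf w.2 i))) (x, mu) : ℝ) := hq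
        have hz := hz2 i x mu hq
        have hz' : (0:ℝ) < (z i mu x : ℝ) := hz
        have hs' : (0:ℝ) < (push p (fun w : β × (Fin n → α) => (w.1, prefixOf w.2 i)) mu : ℝ) := hs
        rw [hc]
        simp only
        rw [zstar_eq p i mu hs x, NNReal.coe_div, one_div_div, one_div]
        rw [Real.log_div (mul_pos hs' hz').ne' hq'.ne', Real.log_mul hs'.ne' hz'.ne',
          Real.log_div hs'.ne' hq'.ne', Real.log_inv]
        ring
    rw [heq]
    linarith
  · have hs0 : push p (fun w : β × (Fin n → α) => (w.1, prefixOf w.2 i)) mu = 0 := by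
      simpa [pos_iff_ne_zero, not_not] using hs
    refine le_of_eq (Finset.sum_eq_zero fun x _ => ?_).symm
    have hq0 : push p (fun w : β × (Fin n → α) => (w.2 i, (w.1, prefixOf w.2 i))) (x, mu) = 0 := by
      have hle : push p (fun w : β × (Fin n → α) => (w.2 i, (w.1, prefixOf w.2 i))) (x, mu)
          ≤ push p (fun w : β × (Fin n → α) => (w.1, prefixOf w.2 i)) mu := by
        rw [← push_pair_marg p (fun w : β × (Fin n → α) => w.2 i)
          (fun w : β × (Fin n → α) => (w.1, prefixOf w.2 i)) mu]
        exact Finset.single_le_sum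
          (f := fun x' => push p (fun w : β × (Fin n → α) => (w.2 i, (w.1, prefixOf w.2 i))) (x', mu))
          (fun _ _ => zero_le) (Finset.mem_univ x)
      exact le_antisymm (hs0 ▸ hle) zero_le
    simp [hq0]

end Main

/-- **Optimal causal eavesdropper incurs the normalized equivocation**: for a message
`M` valued in `β` and a source sequence `X^n` valued in `Fin n → α` with joint pmf `p`,
the minimal time-averaged expected log-loss over all causal eavesdropper strategies
`z i : β × (Fin i → α) → pmf on α` (positive wherever the corresponding joint
probability is positive) equals `(1 / n) * H(X^n | M)`, and it is attained by the
posterior choices `z i (m, x^{i-1}) x = P(X_i = x | M = m, X^{i-1} = x^{i-1})`. -/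
theorem optimal_causal_eavesdropper (α β : Type*) [Fintype α] [Fintype β] (n : ℕ)
    (hn : 0 < n) (p : β × (Fin n → α) → ℝ≥0) (hp : ∑ w, p w = 1) :
    IsLeast
      { L : ℝ | ∃ z : (i : Fin n) → β × (Fin i.val → α) → α → ℝ≥0,
          (∀ (i : Fin n) (mu : β × (Fin i.val → α)), ∑ x, z i mu x = 1) ∧
          (∀ (i : Fin n) (x : α) (mu : β × (Fin i.val → α)),
            0 < push p (fun w : β × (Fin n → α) =>
                (w.2 i, (w.1, prefixOf w.2 i))) (x, mu) →
            0 < z i mu x) ∧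
          L = (1 / (n : ℝ)) * ∑ i : Fin n, ∑ w : β × (Fin n → α),
                (p w : ℝ) * Real.log (1 / (z i (w.1, prefixOf w.2 i) (w.2 i) : ℝ)) }
      ((1 / (n : ℝ)) * condEnt (push p (fun w : β × (Fin n → α) => (w.2, w.1)))) ∧
    ∃ z : (i : Fin n) → β × (Fin i.val → α) → α → ℝ≥0,
      (∀ (i : Fin n) (mu : β × (Fin i.val → α)), ∑ x, z i mu x = 1) ∧
      (∀ (i : Fin n) (x : α) (mu : β × (Fin i.val → α)),
        0 < push p (fun w : β × (Fin n → α) =>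
            (w.2 i, (w.1, prefixOf w.2 i))) (x, mu) →
        0 < z i mu x) ∧
      (∀ (i : Fin n) (mu : β × (Fin i.val → α)),
        0 < push p (fun w : β × (Fin n → α) => (w.1, prefixOf w.2 i)) mu →
        ∀ x : α,
          z i mu x =
            push p (fun w : β × (Fin n → α) => (w.2 i, (w.1, prefixOf w.2 i))) (x, mu) /
              push p (fun w : β × (Fin n → α) => (w.1, prefixOf w.2 i)) mu) ∧
      (1 / (n : ℝ)) * ∑ i : Fin n, ∑ w : β × (Fin n → α),
          (p w : ℝ) * Real.log (1 / (z i (w.1, prefixOf w.2 i) (w.2 i) : ℝ)) =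
        (1 / (n : ℝ)) * condEnt (push p (fun w : β × (Fin n → α) => (w.2, w.1))) := by
  have hne : Nonempty α := by
    by_contra h
    rw [not_nonempty_iff] at h
    haveI : IsEmpty (Fin n → α) := ⟨fun f => (h.false (f ⟨0, hn⟩))⟩
    rw [Finset.univ_eq_empty, Finset.sum_empty] at hp
    exact zero_ne_one hp
  refine ⟨⟨⟨zstar p, fun i mu => zstar_sum p i mu, fun i x mu h => zstar_pos p i x mu h,
      by rw [zstar_loss]⟩, ?_⟩,
    ⟨zstar p, fun i mu => zstar_sum p i mu, fun i x mu h => zstar_pos p i x mu h,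
      fun i mu hmu x => zstar_eq p i mu hmu x, by rw [zstar_loss]⟩⟩
  rintro L ⟨z, hz1, hz2, rfl⟩
  have h1n : (0:ℝ) ≤ 1 / (n : ℝ) := by positivity
  refine mul_le_mul_of_nonneg_left ?_ h1n
  rw [← zstar_loss p]
  exact Finset.sum_le_sum fun i _ => loss_mono p z hz1 hz2 i
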